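/- Let U₁ and U₂ be closed linear subspaces of a real Hilbert space X, and define T : X × X → X × X by T(x,y) := ( P_{U₁}(x − y), P_{U₂^⊥}( (P_{U₁} − P_{U₁^⊥})(x − y) ) ). Then the fixed point set of T equals the product (U₁ ∩ U₂) × (U₁^⊥ ∩ U₂^⊥), i.e., T(x,y) = (x,y) if and only if x ∈ U₁ ∩ U₂ and y ∈ U₁^⊥ ∩ U₂^⊥. -/

import Mathlib

open scoped RealInnerProductSpace

/-- The fixed point set of the Douglas–Rachford PPP operator
`T(x,y) = (P_{U₁}(x-y), P_{U₂ᗮ}((P_{U₁} - P_{U₁ᗮ})(x-y)))` for two closed subspaces `U₁, U₂`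
equals `(U₁ ⊓ U₂) × (U₁ᗮ ⊓ U₂ᗮ)`. -/
theorem stmt_12
    {X : Type*} [NormedAddCommGroup X] [InnerProductSpace ℝ X] [CompleteSpace X]
    (U₁ U₂ : Submodule ℝ X) [U₁.HasOrthogonalProjection] [U₂.HasOrthogonalProjection]
    (x y : X) :
    ((Submodule.orthogonalProjectionOnto U₁ (x - y) : X) = x ∧
        (Submodule.orthogonalProjectionOnto U₂ᗮ
          ((Submodule.orthogonalProjectionOnto U₁ (x - y) : X) -
            (Submodule.orthogonalProjectionOnto U₁ᗮ (x - y) : X)) : X) = y) ↔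
      (x ∈ U₁ ⊓ U₂ ∧ y ∈ U₁ᗮ ⊓ U₂ᗮ) := by
  constructor
  · rintro ⟨h1, h2⟩
    have hx1 : x ∈ U₁ := h1 ▸ (U₁.orthogonalProjectionOnto (x - y)).2
    have hq : (U₁ᗮ.orthogonalProjectionOnto (x - y) : X) = -y := by
      change U₁ᗮ.starProjection (x - y) = -y
      rw [Submodule.starProjection_orthogonal_val]
      change x - y - (U₁.orthogonalProjectionOnto (x - y) : X) = -y
      rw [h1]; abel
    rw [h1, hq, sub_neg_eq_add] at h2
    have hy2 : y ∈ U₂ᗮ := h2 ▸ (U₂ᗮ.orthogonalProjectionOnto (x + y)).2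
    have hy1 : y ∈ U₁ᗮ := by
      have := hq ▸ (U₁ᗮ.orthogonalProjectionOnto (x - y)).2
      simpa using U₁ᗮ.neg_mem this
    have hx2 : x ∈ U₂ := by
      have : (x + y) - (U₂ᗮ.orthogonalProjectionOnto (x + y) : X) ∈ U₂ᗮᗮ :=
        Submodule.sub_starProjection_mem_orthogonal _
      rw [h2, add_sub_cancel_right, Submodule.orthogonal_orthogonal] at this
      exact this
    exact ⟨⟨hx1, hx2⟩, ⟨hy1, hy2⟩⟩
  · rintro ⟨⟨hx1, hx2⟩, ⟨hy1, hy2⟩⟩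
    have h1 : (U₁.orthogonalProjectionOnto (x - y) : X) = x :=
      Submodule.eq_starProjection_of_mem_orthogonal' hx1 (U₁ᗮ.neg_mem hy1) (by abel)
    refine ⟨h1, ?_⟩
    have hq : (U₁ᗮ.orthogonalProjectionOnto (x - y) : X) = -y := by
      change U₁ᗮ.starProjection (x - y) = -y
      rw [Submodule.starProjection_orthogonal_val]
      change x - y - (U₁.orthogonalProjectionOnto (x - y) : X) = -y
      rw [h1]; abel
    rw [h1, hq, sub_neg_eq_add]
    exact Submodule.eq_starProjection_of_mem_orthogonal' hy2
      (by rw [Submodule.orthogonal_orthogonal]; exact hx2) (by abel)
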